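/- For every real c > 0 and every positive integer N, ∑_{n=N}^∞ (n c·K₁(n c) − K₀(n c)) ≤ √(π/2)·exp(−cN/2)/(1 − exp(−c/2)). -/

import Mathlib

open MeasureTheory Real Set Filter

/-- Modified Bessel function of the second kind of order 0:
`K₀(x) = ∫₀^∞ exp(−x cosh t) dt`. -/
noncomputable def besselK0 (x : ℝ) : ℝ :=
  ∫ t in Set.Ioi (0 : ℝ), Real.exp (-(x * Real.cosh t))

/-- Modified Bessel function of the second kind of order 1:
`K₁(x) = ∫₀^∞ exp(−x cosh t)·cosh t dt`. -/
noncomputable def besselK1 (x : ℝ) : ℝ :=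
  ∫ t in Set.Ioi (0 : ℝ), Real.exp (-(x * Real.cosh t)) * Real.cosh t

lemma aux_sinh_nonneg (t : ℝ) (ht : 0 ≤ t) : 0 ≤ Real.sinh t :=
  le_trans ht (Real.self_le_sinh_iff.2 ht)

lemma aux_cosh_lower (t : ℝ) (ht : 0 ≤ t) : 1 + t ^ 2 / 2 ≤ Real.cosh t := by
  have h1 : t / 2 ≤ Real.sinh (t / 2) := Real.self_le_sinh_iff.2 (by linarith)
  have h2 : Real.cosh t = 2 * Real.sinh (t / 2) ^ 2 + 1 := by
    have h := Real.cosh_two_mul (t / 2)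
    rw [show 2 * (t / 2) = t by ring] at h
    rw [h, Real.cosh_sq]; ring
  nlinarith [h1, ht]

lemma aux_self_le_cosh (t : ℝ) (ht : 0 ≤ t) : t ≤ Real.cosh t := by
  nlinarith [aux_cosh_lower t ht, sq_nonneg (t - 1)]

lemma aux_sinh_le_cosh (t : ℝ) : Real.sinh t ≤ Real.cosh t := by
  nlinarith [Real.cosh_sub_sinh t, Real.exp_pos (-t)]

lemma aux_sinh_le_mul_cosh (y : ℝ) (hy : 0 ≤ y) : Real.sinh y ≤ y * Real.cosh y := by
  have key : MonotoneOn (fun z : ℝ => z * Real.cosh z - Real.sinh z) (Set.Ici 0) := by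
    have hd : ∀ z : ℝ, HasDerivAt (fun z : ℝ => z * Real.cosh z - Real.sinh z)
        (z * Real.sinh z) z := by
      intro z
      have h := ((hasDerivAt_id z).mul (Real.hasDerivAt_cosh z)).sub (Real.hasDerivAt_sinh z)
      refine h.congr_deriv ?_
      simp only [id_eq, one_mul]
      ring
    apply monotoneOn_of_deriv_nonneg (convex_Ici 0)
    · exact (Continuous.continuousOn (by continuity))
    · intro z _; exact (hd z).differentiableAt.differentiableWithinAt
    · intro z hz
      rw [interior_Ici] at hz
      rw [(hd z).deriv]
      exact mul_nonneg (le_of_lt hz) (aux_sinh_nonneg z (le_of_lt hz))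
  have h := key Set.self_mem_Ici (Set.mem_Ici.2 hy) hy
  simp only [Real.sinh_zero, Real.cosh_zero, mul_one, zero_mul, sub_zero] at h
  linarith

lemma aux_cosh_le_one_add (t : ℝ) (ht : 0 ≤ t) : Real.cosh t ≤ 1 + t * Real.sinh t := by
  have h2 : Real.cosh t = 2 * Real.sinh (t / 2) ^ 2 + 1 := by
    have h := Real.cosh_two_mul (t / 2)
    rw [show 2 * (t / 2) = t by ring] at h
    rw [h, Real.cosh_sq]; ring
  have h3 : Real.sinh t = 2 * Real.sinh (t / 2) * Real.cosh (t / 2) := by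
    have h := Real.sinh_two_mul (t / 2)
    rw [show 2 * (t / 2) = t by ring] at h
    linarith
  have h4 : Real.sinh (t / 2) ≤ (t / 2) * Real.cosh (t / 2) :=
    aux_sinh_le_mul_cosh (t / 2) (by linarith)
  have h5 : 0 ≤ Real.sinh (t / 2) := aux_sinh_nonneg _ (by linarith)
  nlinarith [h4, h5]

lemma aux_le_exp_half (u : ℝ) : u ≤ 2 * Real.exp (u / 2) := by
  have := Real.add_one_le_exp (u / 2)
  linarith

lemma aux_sq_le_exp_half (u : ℝ) (hu : 0 ≤ u) : u ^ 2 ≤ 16 * Real.exp (u / 2) := by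
  have h1 := Real.add_one_le_exp (u / 4)
  have h2 : Real.exp (u / 4) * Real.exp (u / 4) = Real.exp (u / 2) := by
    rw [← Real.exp_add]; ring_nf
  nlinarith [h1, hu, Real.exp_pos (u / 4)]

lemma integ_K0 {x : ℝ} (hx : 0 < x) :
    IntegrableOn (fun t => Real.exp (-(x * Real.cosh t))) (Set.Ioi (0 : ℝ)) := by
  apply Integrable.mono' (exp_neg_integrableOn_Ioi 0 hx)
  · exact (Real.continuous_exp.comp (by continuity)).aestronglyMeasurable
  · filter_upwards [ae_restrict_mem measurableSet_Ioi] with t ht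
    rw [Real.norm_eq_abs, abs_of_pos (Real.exp_pos _)]
    apply Real.exp_le_exp.2
    have := aux_self_le_cosh t (le_of_lt ht)
    nlinarith [hx, this]

lemma integ_K1 {x : ℝ} (hx : 0 < x) :
    IntegrableOn (fun t => Real.exp (-(x * Real.cosh t)) * Real.cosh t) (Set.Ioi (0 : ℝ)) := by
  apply Integrable.mono' (((exp_neg_integrableOn_Ioi 0 (half_pos hx)).const_mul (2 / x)))
  · exact ((Real.continuous_exp.comp (by continuity)).mul Real.continuous_cosh).aestronglyMeasurable
  · filter_upwards [ae_restrict_mem measurableSet_Ioi] with t ht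
    have hc1 : (1 : ℝ) ≤ Real.cosh t := Real.one_le_cosh t
    have hcp : (0 : ℝ) < Real.cosh t := by linarith
    rw [Real.norm_eq_abs, abs_of_pos (mul_pos (Real.exp_pos _) hcp)]
    have h1 : x * Real.cosh t ≤ 2 * Real.exp (x * Real.cosh t / 2) := aux_le_exp_half _
    have h3 : Real.exp (x * Real.cosh t / 2) * Real.exp (-(x * Real.cosh t)) =
        Real.exp (-(x / 2 * Real.cosh t)) := by
      rw [← Real.exp_add]; congr 1; ring
    have h4 : Real.exp (-(x / 2 * Real.cosh t)) ≤ Real.exp (-(x / 2) * t) := by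
      apply Real.exp_le_exp.2
      have := aux_self_le_cosh t (le_of_lt ht)
      nlinarith [half_pos hx, this]
    have h5 : Real.exp (-(x * Real.cosh t)) * (x * Real.cosh t) ≤
        2 * Real.exp (-(x / 2) * t) := by
      calc Real.exp (-(x * Real.cosh t)) * (x * Real.cosh t)
          ≤ Real.exp (-(x * Real.cosh t)) * (2 * Real.exp (x * Real.cosh t / 2)) :=
            mul_le_mul_of_nonneg_left h1 (le_of_lt (Real.exp_pos _))
        _ = 2 * (Real.exp (x * Real.cosh t / 2) * Real.exp (-(x * Real.cosh t))) := by ring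
        _ = 2 * Real.exp (-(x / 2 * Real.cosh t)) := by rw [h3]
        _ ≤ 2 * Real.exp (-(x / 2) * t) := by linarith [h4]
    refine le_of_mul_le_mul_left ?_ hx
    calc x * (Real.exp (-(x * Real.cosh t)) * Real.cosh t)
        = Real.exp (-(x * Real.cosh t)) * (x * Real.cosh t) := by ring
      _ ≤ 2 * Real.exp (-(x / 2) * t) := h5
      _ = x * (2 / x * Real.exp (-(x / 2) * t)) := by field_simp

lemma integ_tsinh {x : ℝ} (hx : 0 < x) :
    IntegrableOn (fun t => t * Real.sinh t * Real.exp (-(x * Real.cosh t)))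
      (Set.Ioi (0 : ℝ)) := by
  apply Integrable.mono' (((exp_neg_integrableOn_Ioi 0 (half_pos hx)).const_mul (16 / x ^ 2)))
  · exact ((continuous_id.mul Real.continuous_sinh).mul
      (Real.continuous_exp.comp (by continuity))).aestronglyMeasurable
  · filter_upwards [ae_restrict_mem measurableSet_Ioi] with t ht
    have htp : (0 : ℝ) < t := ht
    have hc1 : (1 : ℝ) ≤ Real.cosh t := Real.one_le_cosh t
    have hcp : (0 : ℝ) < Real.cosh t := by linarith
    have hsn : 0 ≤ Real.sinh t := aux_sinh_nonneg t htp.le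
    rw [Real.norm_eq_abs, abs_of_nonneg (by positivity)]
    -- t * sinh t ≤ cosh t ^ 2
    have hb : t * Real.sinh t ≤ Real.cosh t ^ 2 := by
      have h1 := aux_self_le_cosh t htp.le
      have h2 := aux_sinh_le_cosh t
      nlinarith
    have hsq : (x * Real.cosh t) ^ 2 ≤ 16 * Real.exp (x * Real.cosh t / 2) :=
      aux_sq_le_exp_half _ (by positivity)
    have h3 : Real.exp (x * Real.cosh t / 2) * Real.exp (-(x * Real.cosh t)) =
        Real.exp (-(x / 2 * Real.cosh t)) := by
      rw [← Real.exp_add]; congr 1; ring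
    have h4 : Real.exp (-(x / 2 * Real.cosh t)) ≤ Real.exp (-(x / 2) * t) := by
      apply Real.exp_le_exp.2
      have := aux_self_le_cosh t htp.le
      nlinarith [half_pos hx, this]
    have h5 : Real.exp (-(x * Real.cosh t)) * (x * Real.cosh t) ^ 2 ≤
        16 * Real.exp (-(x / 2) * t) := by
      calc Real.exp (-(x * Real.cosh t)) * (x * Real.cosh t) ^ 2
          ≤ Real.exp (-(x * Real.cosh t)) * (16 * Real.exp (x * Real.cosh t / 2)) :=
            mul_le_mul_of_nonneg_left hsq (le_of_lt (Real.exp_pos _))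
        _ = 16 * (Real.exp (x * Real.cosh t / 2) * Real.exp (-(x * Real.cosh t))) := by ring
        _ = 16 * Real.exp (-(x / 2 * Real.cosh t)) := by rw [h3]
        _ ≤ 16 * Real.exp (-(x / 2) * t) := by linarith [h4]
    have hx2 : (0 : ℝ) < x ^ 2 := by positivity
    refine le_of_mul_le_mul_left ?_ hx2
    calc x ^ 2 * (t * Real.sinh t * Real.exp (-(x * Real.cosh t)))
        ≤ x ^ 2 * (Real.cosh t ^ 2 * Real.exp (-(x * Real.cosh t))) := by
          apply mul_le_mul_of_nonneg_left _ hx2.le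
          exact mul_le_mul_of_nonneg_right hb (le_of_lt (Real.exp_pos _))
      _ = Real.exp (-(x * Real.cosh t)) * (x * Real.cosh t) ^ 2 := by ring
      _ ≤ 16 * Real.exp (-(x / 2) * t) := h5
      _ = x ^ 2 * (16 / x ^ 2 * Real.exp (-(x / 2) * t)) := by field_simp


lemma ibp {x : ℝ} (hx : 0 < x) :
    x * ∫ t in Set.Ioi (0 : ℝ), t * Real.sinh t * Real.exp (-(x * Real.cosh t)) =
      besselK0 x := by
  have hderiv : ∀ t ∈ Set.Ici (0 : ℝ),
      HasDerivAt (fun t : ℝ => -(t * Real.exp (-(x * Real.cosh t))))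
        (x * (t * Real.sinh t * Real.exp (-(x * Real.cosh t))) -
          Real.exp (-(x * Real.cosh t))) t := by
    intro t _
    have h1 : HasDerivAt (fun t : ℝ => -(x * Real.cosh t)) (-(x * Real.sinh t)) t :=
      ((Real.hasDerivAt_cosh t).const_mul x).neg
    have h2 := h1.exp
    have h3 := ((hasDerivAt_id t).mul h2).neg
    refine h3.congr_deriv ?_
    simp only [id_eq, one_mul]
    ring
  have hint : IntegrableOn (fun t => x * (t * Real.sinh t * Real.exp (-(x * Real.cosh t))) -
      Real.exp (-(x * Real.cosh t))) (Set.Ioi (0 : ℝ)) :=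
    ((integ_tsinh hx).const_mul x).sub (integ_K0 hx)
  have htend : Tendsto (fun t : ℝ => -(t * Real.exp (-(x * Real.cosh t)))) atTop (nhds 0) := by
    apply squeeze_zero_norm'
      ?_ (by simpa using tendsto_rpow_mul_exp_neg_mul_atTop_nhds_zero 1 x hx)
    filter_upwards [eventually_ge_atTop (0 : ℝ)] with t ht
    rw [norm_neg, Real.norm_eq_abs, abs_of_nonneg (by positivity)]
    apply mul_le_mul_of_nonneg_left _ ht
    apply Real.exp_le_exp.2
    nlinarith [aux_self_le_cosh t ht, hx]
  have h0 := MeasureTheory.integral_Ioi_of_hasDerivAt_of_tendsto' hderiv hint htend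
  simp only [Real.cosh_zero, mul_one, zero_mul, neg_zero, sub_zero, sub_neg_eq_add, add_zero,
    zero_sub, neg_neg] at h0
  rw [MeasureTheory.integral_sub ((integ_tsinh hx).const_mul x) (integ_K0 hx),
    MeasureTheory.integral_const_mul] at h0
  unfold besselK0
  linarith [h0]

lemma step1 {x : ℝ} (hx : 0 < x) : x * besselK1 x - besselK0 x ≤ x * besselK0 x := by
  have hmono : (∫ t in Set.Ioi (0 : ℝ), (Real.exp (-(x * Real.cosh t)) * Real.cosh t -
        t * Real.sinh t * Real.exp (-(x * Real.cosh t)))) ≤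
      ∫ t in Set.Ioi (0 : ℝ), Real.exp (-(x * Real.cosh t)) := by
    apply MeasureTheory.setIntegral_mono_on ((integ_K1 hx).sub (integ_tsinh hx)) (integ_K0 hx)
      measurableSet_Ioi
    intro t ht
    have h := aux_cosh_le_one_add t (le_of_lt ht)
    simp only [Pi.sub_apply]
    nlinarith [Real.exp_pos (-(x * Real.cosh t)), h]
  have hsub := MeasureTheory.integral_sub (integ_K1 hx) (integ_tsinh hx)
  have hibp := ibp hx
  calc x * besselK1 x - besselK0 x
      = x * (besselK1 x - ∫ t in Set.Ioi (0 : ℝ), t * Real.sinh t *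
          Real.exp (-(x * Real.cosh t))) := by rw [mul_sub, hibp]
    _ = x * ∫ t in Set.Ioi (0 : ℝ), (Real.exp (-(x * Real.cosh t)) * Real.cosh t -
          t * Real.sinh t * Real.exp (-(x * Real.cosh t))) := by
          rw [hsub]; rfl
    _ ≤ x * ∫ t in Set.Ioi (0 : ℝ), Real.exp (-(x * Real.cosh t)) :=
          mul_le_mul_of_nonneg_left hmono hx.le
    _ = x * besselK0 x := rfl

lemma step2 {x : ℝ} (hx : 0 < x) :
    besselK0 x ≤ Real.exp (-x) * (Real.sqrt (Real.pi / (x / 2)) / 2) := by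
  have hgauss : Integrable (fun t : ℝ => Real.exp (-(x / 2) * t ^ 2)) :=
    integrable_exp_neg_mul_sq (half_pos hx)
  have hmono : besselK0 x ≤
      ∫ t in Set.Ioi (0 : ℝ), Real.exp (-x) * Real.exp (-(x / 2) * t ^ 2) := by
    unfold besselK0
    apply MeasureTheory.setIntegral_mono_on (integ_K0 hx)
      ((hgauss.integrableOn).const_mul _) measurableSet_Ioi
    intro t ht
    rw [← Real.exp_add]
    apply Real.exp_le_exp.2
    have := aux_cosh_lower t (le_of_lt ht)
    nlinarith [hx, this]
  rw [MeasureTheory.integral_const_mul, integral_gaussian_Ioi (x / 2)] at hmono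
  exact hmono

lemma key {x : ℝ} (hx : 0 < x) :
    x * besselK1 x - besselK0 x ≤ Real.sqrt (Real.pi / 2) * Real.exp (-(x / 2)) := by
  have halg : x * (Real.exp (-x) * (Real.sqrt (Real.pi / (x / 2)) / 2)) =
      Real.sqrt (Real.pi / 2) * (Real.sqrt x * Real.exp (-x)) := by
    have e1 : x * Real.sqrt (Real.pi / (x / 2)) = Real.sqrt (x ^ 2 * (Real.pi / (x / 2))) := by
      rw [Real.sqrt_mul (sq_nonneg x), Real.sqrt_sq hx.le]
    have e2 : x ^ 2 * (Real.pi / (x / 2)) = (Real.pi / 2 * x) * 4 := by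
      field_simp; ring
    have e3 : Real.sqrt ((Real.pi / 2 * x) * 4) = Real.sqrt (Real.pi / 2) * Real.sqrt x * 2 := by
      rw [Real.sqrt_mul (by positivity), Real.sqrt_mul (by positivity : (0:ℝ) ≤ Real.pi / 2),
        show Real.sqrt 4 = 2 by rw [show (4 : ℝ) = 2 ^ 2 by norm_num, Real.sqrt_sq]; norm_num]
    have : x * Real.sqrt (Real.pi / (x / 2)) = Real.sqrt (Real.pi / 2) * Real.sqrt x * 2 := by
      rw [e1, e2, e3]
    calc x * (Real.exp (-x) * (Real.sqrt (Real.pi / (x / 2)) / 2))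
        = (x * Real.sqrt (Real.pi / (x / 2))) * Real.exp (-x) / 2 := by ring
      _ = Real.sqrt (Real.pi / 2) * Real.sqrt x * 2 * Real.exp (-x) / 2 := by rw [this]
      _ = Real.sqrt (Real.pi / 2) * (Real.sqrt x * Real.exp (-x)) := by ring
  have hfin : Real.sqrt x * Real.exp (-x) ≤ Real.exp (-(x / 2)) := by
    have hs : Real.sqrt x ≤ Real.exp (x / 2) := by
      have hxe : x ≤ Real.exp x := by linarith [Real.add_one_le_exp x]
      have h2 : (Real.exp (x / 2)) ^ 2 = Real.exp x := by
        rw [sq, ← Real.exp_add]; ring_nf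
      calc Real.sqrt x ≤ Real.sqrt (Real.exp x) := Real.sqrt_le_sqrt hxe
        _ = Real.exp (x / 2) := by rw [← h2, Real.sqrt_sq (Real.exp_pos _).le]
    calc Real.sqrt x * Real.exp (-x) ≤ Real.exp (x / 2) * Real.exp (-x) :=
          mul_le_mul_of_nonneg_right hs (Real.exp_pos _).le
      _ = Real.exp (-(x / 2)) := by rw [← Real.exp_add]; ring_nf
  calc x * besselK1 x - besselK0 x
      ≤ x * besselK0 x := step1 hx
    _ ≤ x * (Real.exp (-x) * (Real.sqrt (Real.pi / (x / 2)) / 2)) :=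
        mul_le_mul_of_nonneg_left (step2 hx) hx.le
    _ = Real.sqrt (Real.pi / 2) * (Real.sqrt x * Real.exp (-x)) := halg
    _ ≤ Real.sqrt (Real.pi / 2) * Real.exp (-(x / 2)) :=
        mul_le_mul_of_nonneg_left hfin (Real.sqrt_nonneg _)

/-- For every real `c > 0` and every positive integer `N`,
`∑_{n=N}^∞ (n c·K₁(n c) − K₀(n c)) ≤ √(π/2)·exp(−cN/2)/(1 − exp(−c/2))`. -/
theorem stmt_11 (c : ℝ) (hc : 0 < c) (N : ℕ) (hN : 0 < N) :
    ∑' n : ℕ, (((N + n : ℕ) : ℝ) * c * besselK1 (((N + n : ℕ) : ℝ) * c) -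
        besselK0 (((N + n : ℕ) : ℝ) * c)) ≤
      Real.sqrt (Real.pi / 2) * Real.exp (-(c * N / 2)) / (1 - Real.exp (-(c / 2))) := by
  have hr0 : (0 : ℝ) ≤ Real.exp (-(c / 2)) := (Real.exp_pos _).le
  have hr1 : Real.exp (-(c / 2)) < 1 := Real.exp_lt_one_iff.2 (by linarith)
  have hden : 0 < 1 - Real.exp (-(c / 2)) := by linarith
  set g : ℕ → ℝ := fun n =>
    Real.sqrt (Real.pi / 2) * Real.exp (-(c * N / 2)) * Real.exp (-(c / 2)) ^ n with hgdef
  have hgsum : Summable g := (summable_geometric_of_lt_one hr0 hr1).mul_left _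
  have hbound : ∀ n : ℕ, ((N + n : ℕ) : ℝ) * c * besselK1 (((N + n : ℕ) : ℝ) * c) -
      besselK0 (((N + n : ℕ) : ℝ) * c) ≤ g n := by
    intro n
    have hpos : (0 : ℝ) < ((N + n : ℕ) : ℝ) := by
      have : 0 < N + n := by omega
      exact_mod_cast this
    have hx : 0 < ((N + n : ℕ) : ℝ) * c := mul_pos hpos hc
    refine (key hx).trans_eq ?_
    have hexp : Real.exp (-(((N + n : ℕ) : ℝ) * c / 2)) =
        Real.exp (-(c * N / 2)) * Real.exp (-(c / 2)) ^ n := by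
      rw [← Real.exp_nat_mul, ← Real.exp_add]
      congr 1
      push_cast
      ring
    rw [hgdef]
    simp only []
    rw [mul_assoc, ← hexp]
  by_cases hsum : Summable (fun n : ℕ =>
      ((N + n : ℕ) : ℝ) * c * besselK1 (((N + n : ℕ) : ℝ) * c) -
        besselK0 (((N + n : ℕ) : ℝ) * c))
  · have hle := Summable.tsum_le_tsum hbound hsum hgsum
    have hgs : ∑' n, g n = Real.sqrt (Real.pi / 2) * Real.exp (-(c * N / 2)) *
        (1 - Real.exp (-(c / 2)))⁻¹ := by
      rw [hgdef, tsum_mul_left, tsum_geometric_of_lt_one hr0 hr1]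
    rw [hgs] at hle
    rw [div_eq_mul_inv]
    exact hle
  · rw [tsum_eq_zero_of_not_summable hsum]
    apply div_nonneg _ hden.le
    positivity
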